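/- Characterization of real slice functions: Let F = (F₁, F₂) be a quaternionic stem function on D and f = I(F) the induced slice function on Ω_D. Then F₁ and F₂ are real valued (i.e. F₁(z), F₂(z) ∈ ℝ·1 ⊆ ℍ for all z ∈ D) if and only if for every J ∈ 𝕊 the restriction f_J maps D_J := Ω_D ∩ ℂ_Jⁿ into ℂ_J. -/

import Mathlib

/-- The sphere of quaternionic imaginary units. -/
def Sphere : Set (Quaternion ℝ) := {J | J * J = -1}

/-- The point `α + iβ ∈ ℂⁿ`. -/
noncomputable def cpt {n : ℕ} (α β : Fin n → ℝ) : Fin n → ℂ :=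
  fun t => (α t : ℂ) + (β t : ℂ) * Complex.I

/-- The point `α + βJ ∈ ℍⁿ`. -/
noncomputable def qpt {n : ℕ} (α β : Fin n → ℝ) (J : Quaternion ℝ) : Fin n → Quaternion ℝ :=
  fun t => (α t : Quaternion ℝ) + (β t : Quaternion ℝ) * J

/-- Componentwise complex conjugation on `ℂⁿ`. -/
def conjPt {n : ℕ} (z : Fin n → ℂ) : Fin n → ℂ := fun t => (starRingEnd ℂ) (z t)

open scoped Quaternion

/-- The quaternion `i`. -/
def qunitI : Quaternion ℝ := ⟨0,1,0,0⟩
/-- The quaternion `j`. -/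
def qunitJ : Quaternion ℝ := ⟨0,0,1,0⟩
/-- The quaternion `k`. -/
def qunitK : Quaternion ℝ := ⟨0,0,0,1⟩

lemma qunitI_mem : qunitI ∈ Sphere := by
  show qunitI * qunitI = -1; ext <;> simp <;> simp [qunitI]

lemma qunitJ_mem : qunitJ ∈ Sphere := by
  show qunitJ * qunitJ = -1; ext <;> simp <;> simp [qunitJ]

lemma qunitK_mem : qunitK ∈ Sphere := by
  show qunitK * qunitK = -1; ext <;> simp <;> simp [qunitK]

/-- Characterization of real slice functions: the stem components are real valued iff
every slice restriction `f_J` maps `D_J` into `ℂ_J`. -/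
theorem real_slice_function_iff {n : ℕ} (D : Set (Fin n → ℂ)) (hD : IsOpen D)
    (hDconj : ∀ z ∈ D, conjPt z ∈ D)
    (F₁ F₂ : (Fin n → ℂ) → Quaternion ℝ)
    (hF₁ : ∀ z ∈ D, F₁ (conjPt z) = F₁ z)
    (hF₂ : ∀ z ∈ D, F₂ (conjPt z) = - F₂ z) :
    (∀ z ∈ D, (∃ r : ℝ, F₁ z = (r : Quaternion ℝ)) ∧ (∃ s : ℝ, F₂ z = (s : Quaternion ℝ))) ↔
    (∀ J ∈ Sphere, ∀ α β : Fin n → ℝ, cpt α β ∈ D →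
      ∃ a b : ℝ, F₁ (cpt α β) + J * F₂ (cpt α β)
        = (a : Quaternion ℝ) + (b : Quaternion ℝ) * J) := by
  constructor
  · rintro h J _ α β hz
    obtain ⟨⟨r, hr⟩, ⟨s, hs⟩⟩ := h _ hz
    exact ⟨r, s, by rw [hr, hs, Quaternion.coe_commutes]⟩
  · intro h z hz
    have hz' : cpt (fun t => (z t).re) (fun t => (z t).im) = z := by
      funext t; exact Complex.re_add_im (z t)
    have hz'' : cpt (fun t => (z t).re) (fun t => (z t).im) ∈ D := by rw [hz']; exact hz
    set P := F₁ z with hP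
    set Q := F₂ z with hQ
    obtain ⟨a₁, b₁, h₁⟩ := h qunitI qunitI_mem _ _ hz''
    obtain ⟨a₂, b₂, h₂⟩ := h qunitJ qunitJ_mem _ _ hz''
    obtain ⟨a₃, b₃, h₃⟩ := h qunitK qunitK_mem _ _ hz''
    rw [hz', ← hP, ← hQ, Quaternion.ext_iff] at h₁ h₂ h₃
    simp at h₁; simp [qunitI] at h₁
    simp at h₂; simp [qunitJ] at h₂
    simp at h₃; simp [qunitK] at h₃
    obtain ⟨e11, e12, e13, e14⟩ := h₁
    obtain ⟨e21, e22, e23, e24⟩ := h₂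
    obtain ⟨e31, e32, e33, e34⟩ := h₃
    constructor
    · exact ⟨P.re, by ext <;> simp <;> linarith⟩
    · exact ⟨Q.re, by ext <;> simp <;> linarith⟩
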